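/- arXiv:1806.02970 — 2 statements merged into one kernel-verified Lean document; each statement's English description precedes it below -/
import Mathlib

section
/- Let R be a finite set of n items with preference scores θ : R → ℝ satisfying 1/C ≤ θ_a ≤ 1 for all a ∈ R, where C ≥ 1 is a constant, and let 2 ≤ l ≤ n. For an item x ∈ R define P(x) := (1/binom(n,l)) · Σ_{S ⊆ R, |S| = l, x ∈ S} θ_x / (Σ_{a ∈ S} θ_a), i.e., the probability that x wins a query over a uniformly random l-sized subset of R under the MNL model. Then for any items i, j ∈ R with θ_i > θ_j and any real α with 0 < α ≤ (l−1)/(4(l+C−1)), it holds that P(i)/(P(i)+P(j)) ≥ 1/2 + α(θ_i − θ_j). -/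
set_option maxHeartbeats 1000000 in
open Finset in
/-- Lemma 1: for a uniformly random `l`-sized query from `R`,
the probability that `i` wins given that `i` or `j` wins is at least
`1/2 + α(θ_i − θ_j)` whenever `α ≤ (l−1)/(4(l+C−1))`. -/
theorem stmt_0 {ι : Type*} [Fintype ι] [DecidableEq ι]
    (n l : ℕ) (hn : Fintype.card ι = n) (hl2 : 2 ≤ l) (hln : l ≤ n)
    (C : ℝ) (hC : 1 ≤ C) (θ : ι → ℝ) (hθ : ∀ a, 1 / C ≤ θ a ∧ θ a ≤ 1)
    (P : ι → ℝ)
    (hP : ∀ x, P x = (1 / (n.choose l : ℝ)) *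
        ∑ S ∈ (Finset.univ.powersetCard l).filter (fun S => x ∈ S),
          θ x / ∑ a ∈ S, θ a)
    (i j : ι) (hij : θ j < θ i)
    (α : ℝ) (hα0 : 0 < α) (hα : α ≤ ((l : ℝ) - 1) / (4 * ((l : ℝ) + C - 1))) :
    P i / (P i + P j) ≥ 1 / 2 + α * (θ i - θ j) := by
  classical
  have hC0 : (0:ℝ) < C := lt_of_lt_of_le one_pos hC
  have hθpos : ∀ a, 0 < θ a := fun a => lt_of_lt_of_le (by positivity) (hθ a).1
  have hne : i ≠ j := by rintro rfl; exact lt_irrefl _ hij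
  have hd0 : (0:ℝ) < θ i - θ j := sub_pos.2 hij
  have hl2' : (2:ℝ) ≤ (l:ℝ) := by exact_mod_cast hl2
  have hlC : (0:ℝ) < (l:ℝ) + C - 1 := by linarith
  have hα4 : 4 * α * ((l:ℝ) + C - 1) ≤ (l:ℝ) - 1 := by
    have := (le_div_iff₀ (by positivity : (0:ℝ) < 4 * ((l:ℝ) + C - 1))).1 hα
    linarith
  set T : Finset ι → ℝ := fun S => ∑ a ∈ S, θ a with hTdef
  have hTapp : ∀ S : Finset ι, T S = ∑ a ∈ S, θ a := fun _ => rfl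
  -- basic facts about T
  have hTfact : ∀ S : Finset ι, S.card = l → ∀ x ∈ S,
      ((l:ℝ) - 1)/C ≤ T S - θ x ∧ T S ≤ l := by
    intro S hS x hx
    have herase : T S - θ x = ∑ a ∈ S.erase x, θ a := by
      rw [hTapp, ← Finset.sum_erase_add S θ hx]; ring
    constructor
    · rw [herase]
      have hcard : (S.erase x).card = l - 1 := by rw [Finset.card_erase_of_mem hx, hS]
      have := Finset.card_nsmul_le_sum (S.erase x) θ (1/C) (fun a _ => (hθ a).1)
      rw [hcard, nsmul_eq_mul] at this
      have hcast : ((l - 1 : ℕ) : ℝ) = (l:ℝ) - 1 := by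
        rw [Nat.cast_sub (by omega)]; norm_num
      rw [hcast] at this
      calc ((l:ℝ) - 1)/C = ((l:ℝ) - 1) * (1/C) := by ring
        _ ≤ _ := this
    · have := Finset.sum_le_card_nsmul S θ 1 (fun a _ => (hθ a).2)
      rw [hS, nsmul_eq_mul, mul_one] at this
      exact this
  have hTpos : ∀ S : Finset ι, S.card = l → ∀ x ∈ S, 0 < T S := by
    intro S hS x hx
    exact Finset.sum_pos (fun a _ => hθpos a) ⟨x, hx⟩
  set 𝒜 := (Finset.univ.powersetCard l).filter (fun S => i ∈ S) with h𝒜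
  set ℬ := (Finset.univ.powersetCard l).filter (fun S => j ∈ S) with hℬ
  have hmem𝒜 : ∀ S, S ∈ 𝒜 ↔ S.card = l ∧ i ∈ S := by
    intro S; simp [h𝒜, Finset.mem_powersetCard_univ]
  have hmemℬ : ∀ S, S ∈ ℬ ↔ S.card = l ∧ j ∈ S := by
    intro S; simp [hℬ, Finset.mem_powersetCard_univ]
  set e : Finset ι → Finset ι := fun S => if j ∈ S then S else insert j (S.erase i) with he
  set e' : Finset ι → Finset ι := fun S => if i ∈ S then S else insert i (S.erase j) with he'
  -- e maps 𝒜 into ℬ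
  have hemem : ∀ S ∈ 𝒜, e S ∈ ℬ := by
    intro S hS
    obtain ⟨hcard, hiS⟩ := (hmem𝒜 S).1 hS
    rw [hmemℬ, he]
    by_cases hj : j ∈ S
    · simp [hj, hcard]
    · simp only [hj, if_false]
      have hjne : j ∉ S.erase i := fun h => hj (Finset.mem_of_mem_erase h)
      refine ⟨?_, Finset.mem_insert_self _ _⟩
      rw [Finset.card_insert_of_notMem hjne, Finset.card_erase_of_mem hiS, hcard]
      omega
  have he'mem : ∀ S ∈ ℬ, e' S ∈ 𝒜 := by
    intro S hS
    obtain ⟨hcard, hjS⟩ := (hmemℬ S).1 hS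
    rw [hmem𝒜, he']
    by_cases hi : i ∈ S
    · simp [hi, hcard]
    · simp only [hi, if_false]
      have hine : i ∉ S.erase j := fun h => hi (Finset.mem_of_mem_erase h)
      refine ⟨?_, Finset.mem_insert_self _ _⟩
      rw [Finset.card_insert_of_notMem hine, Finset.card_erase_of_mem hjS, hcard]
      omega
  have hlinv : ∀ S ∈ 𝒜, e' (e S) = S := by
    intro S hS
    obtain ⟨hcard, hiS⟩ := (hmem𝒜 S).1 hS
    rw [he, he']
    by_cases hj : j ∈ S
    · simp [hj, hiS]
    · simp only [hj, if_false]
      have hie : i ∉ insert j (S.erase i) := by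
        simp [hne, Finset.notMem_erase]
      simp only [hie, if_false]
      have hjne : j ∉ S.erase i := fun h => hj (Finset.mem_of_mem_erase h)
      rw [Finset.erase_insert hjne, Finset.insert_erase hiS]
  have hrinv : ∀ S ∈ ℬ, e (e' S) = S := by
    intro S hS
    obtain ⟨hcard, hjS⟩ := (hmemℬ S).1 hS
    rw [he, he']
    by_cases hi : i ∈ S
    · simp [hi, hjS]
    · simp only [hi, if_false]
      have hje : j ∉ insert i (S.erase j) := by
        simp [hne.symm, Finset.notMem_erase]
      simp only [hje, if_false]
      have hine : i ∉ S.erase j := fun h => hi (Finset.mem_of_mem_erase h)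
      rw [Finset.erase_insert hine, Finset.insert_erase hjS]
  -- transfer sum over ℬ to sum over 𝒜
  have hsum : ∑ S ∈ ℬ, θ j / T S = ∑ S ∈ 𝒜, θ j / T (e S) :=
    Finset.sum_nbij' e' e he'mem hemem hrinv hlinv (fun S hS => by rw [hrinv S hS])
  -- pointwise inequality
  have hpoint : ∀ S ∈ 𝒜,
      2 * α * (θ i - θ j) * (θ i / T S + θ j / T (e S)) ≤ θ i / T S - θ j / T (e S) := by
    intro S hS
    obtain ⟨hcard, hiS⟩ := (hmem𝒜 S).1 hS
    obtain ⟨hR, hTl⟩ := hTfact S hcard i hiS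
    have hT0 : 0 < T S := hTpos S hcard i hiS
    have hθi1 : θ i ≤ 1 := (hθ i).2
    have hCR : (l:ℝ) - 1 ≤ C * (T S - θ i) := by
      rw [div_le_iff₀ hC0] at hR
      linarith [hR]
    have hkey : 0 < T (e S) ∧
        2 * α * (θ i - θ j) * (θ i * T (e S) + θ j * T S) ≤ θ i * T (e S) - θ j * T S := by
      by_cases hj : j ∈ S
      · have heS : e S = S := by rw [he]; simp [hj]
        rw [heS]
        refine ⟨hT0, ?_⟩
        have hsum2 : θ i + θ j ≤ 2 := by linarith [(hθ j).2]
        have h4α : 4 * α ≤ 1 := by nlinarith [hα4, hlC]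
        have h2α : 2 * α * (θ i + θ j) ≤ 1 := by
          nlinarith [mul_nonneg hα0.le (by linarith : (0:ℝ) ≤ 2 - (θ i + θ j))]
        nlinarith [mul_le_mul_of_nonneg_left h2α (mul_pos hd0 hT0).le, hd0, hT0]
      · have hjne : j ∉ S.erase i := fun h => hj (Finset.mem_of_mem_erase h)
        have heS : T (e S) = θ j + (T S - θ i) := by
          rw [he]
          simp only [hj, if_false]
          rw [hTapp, Finset.sum_insert hjne]
          have h2 : ∑ a ∈ S.erase i, θ a = T S - θ i := by
            rw [hTapp, ← Finset.sum_erase_add S θ hiS]; ring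
          rw [h2]
        have hR0 : 0 < T S - θ i := by
          have h1 : (0:ℝ) < (l:ℝ) - 1 := by linarith
          have : (0:ℝ) < ((l:ℝ) - 1)/C := by positivity
          linarith
        have hT'0 : 0 < T (e S) := by rw [heS]; linarith [hθpos j]
        refine ⟨hT'0, ?_⟩
        have h4αT : 4 * α * T S ≤ T S - θ i := by
          have h1 : ((l:ℝ) - 1) * T S ≤ ((l:ℝ) + C - 1) * (T S - θ i) := by
            nlinarith [hCR, hR0, hθi1]
          have h2 : 4 * α * ((l:ℝ) + C - 1) * T S ≤ ((l:ℝ) - 1) * T S := by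
            nlinarith [hα4, hT0]
          nlinarith [hlC]
        have hT'le : T (e S) ≤ T S := by rw [heS]; linarith
        have hlhs : θ i * T (e S) + θ j * T S ≤ 2 * T S := by
          nlinarith [hθpos i, hθpos j, (hθ j).2, hT0, hT'le, hθi1]
        have hrhs : θ i * T (e S) - θ j * T S = (θ i - θ j) * (T S - θ i) := by
          rw [heS]; ring
        rw [hrhs]
        calc 2 * α * (θ i - θ j) * (θ i * T (e S) + θ j * T S)
            ≤ 2 * α * (θ i - θ j) * (2 * T S) := by
              apply mul_le_mul_of_nonneg_left hlhs; positivity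
          _ = (θ i - θ j) * (4 * α * T S) := by ring
          _ ≤ (θ i - θ j) * (T S - θ i) := mul_le_mul_of_nonneg_left h4αT hd0.le
    obtain ⟨hT'0, key⟩ := hkey
    have expand : θ i / T S - θ j / T (e S) - 2 * α * (θ i - θ j) * (θ i / T S + θ j / T (e S))
        = (θ i * T (e S) - θ j * T S - 2 * α * (θ i - θ j) * (θ i * T (e S) + θ j * T S))
          / (T S * T (e S)) := by
      field_simp
    have hnum : (0:ℝ) ≤ θ i * T (e S) - θ j * T S
        - 2 * α * (θ i - θ j) * (θ i * T (e S) + θ j * T S) := by linarith [key]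
    have := div_nonneg hnum (by positivity : (0:ℝ) ≤ T S * T (e S))
    linarith [expand ▸ this]
  -- sum it up
  have hsumineq : 2 * α * (θ i - θ j) * ((∑ S ∈ 𝒜, θ i / T S) + ∑ S ∈ ℬ, θ j / T S)
      ≤ (∑ S ∈ 𝒜, θ i / T S) - ∑ S ∈ ℬ, θ j / T S := by
    rw [hsum]
    have h1 := Finset.sum_le_sum hpoint
    rw [Finset.sum_sub_distrib] at h1
    calc 2 * α * (θ i - θ j) * ((∑ S ∈ 𝒜, θ i / T S) + ∑ S ∈ 𝒜, θ j / T (e S))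
        = ∑ S ∈ 𝒜, 2 * α * (θ i - θ j) * (θ i / T S + θ j / T (e S)) := by
          rw [← Finset.sum_add_distrib, Finset.mul_sum]
      _ ≤ _ := h1
  -- positivity of P i, P j
  have hbinom : (0:ℝ) < (n.choose l : ℝ) := by
    exact_mod_cast Nat.choose_pos hln
  have h𝒜ne : 𝒜.Nonempty := by
    obtain ⟨u, hu1, _, hu3⟩ := Finset.exists_subsuperset_card_eq
      (Finset.subset_univ {i}) (by simpa using Nat.one_le_of_lt hl2)
      (by rw [Finset.card_univ, hn]; exact hln)
    exact ⟨u, (hmem𝒜 u).2 ⟨hu3, hu1 (Finset.mem_singleton_self i)⟩⟩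
  have hℬne : ℬ.Nonempty := by
    obtain ⟨u, hu1, _, hu3⟩ := Finset.exists_subsuperset_card_eq
      (Finset.subset_univ {j}) (by simpa using Nat.one_le_of_lt hl2)
      (by rw [Finset.card_univ, hn]; exact hln)
    exact ⟨u, (hmemℬ u).2 ⟨hu3, hu1 (Finset.mem_singleton_self j)⟩⟩
  have hApos : 0 < ∑ S ∈ 𝒜, θ i / T S := by
    apply Finset.sum_pos _ h𝒜ne
    intro S hS
    obtain ⟨hcard, hiS⟩ := (hmem𝒜 S).1 hS
    exact div_pos (hθpos i) (hTpos S hcard i hiS)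
  have hBpos : 0 < ∑ S ∈ ℬ, θ j / T S := by
    apply Finset.sum_pos _ hℬne
    intro S hS
    obtain ⟨hcard, hjS⟩ := (hmemℬ S).1 hS
    exact div_pos (hθpos j) (hTpos S hcard j hjS)
  have hPi : P i = (1 / (n.choose l : ℝ)) * ∑ S ∈ 𝒜, θ i / T S := hP i
  have hPj : P j = (1 / (n.choose l : ℝ)) * ∑ S ∈ ℬ, θ j / T S := hP j
  have hc0 : (0:ℝ) < 1 / (n.choose l : ℝ) := by positivity
  have hPipos : 0 < P i := by rw [hPi]; positivity
  have hPjpos : 0 < P j := by rw [hPj]; positivity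
  have hPsum : 0 < P i + P j := by linarith
  have hPmain : 2 * α * (θ i - θ j) * (P i + P j) ≤ P i - P j := by
    rw [hPi, hPj]
    have h2 := mul_le_mul_of_nonneg_left hsumineq hc0.le
    calc 2 * α * (θ i - θ j) * ((1 / (n.choose l : ℝ)) * (∑ S ∈ 𝒜, θ i / T S)
          + (1 / (n.choose l : ℝ)) * ∑ S ∈ ℬ, θ j / T S)
        = (1 / (n.choose l : ℝ)) * (2 * α * (θ i - θ j)
            * ((∑ S ∈ 𝒜, θ i / T S) + ∑ S ∈ ℬ, θ j / T S)) := by ring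
      _ ≤ (1 / (n.choose l : ℝ)) * ((∑ S ∈ 𝒜, θ i / T S) - ∑ S ∈ ℬ, θ j / T S) := h2
      _ = _ := by ring
  rw [ge_iff_le, le_div_iff₀ hPsum]
  nlinarith [hPmain]
end

section
/- Let l ≥ 2 be an integer, C ≥ 1 a real constant, and let θ_i, θ_j, β be real numbers with 0 < θ_j < θ_i ≤ 1 and β ≥ (l−1)/C. Then (θ_i/(θ_i+β)) / (θ_i/(θ_i+β) + θ_j/(θ_j+β)) ≥ 1/2 + (l−1)(θ_i−θ_j)/(4(l−1+C)). -/
/-- the key single-set inequality in the proof of Lemma 1. -/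
theorem stmt_1 (l : ℕ) (hl : 2 ≤ l) (C θi θj β : ℝ) (hC : 1 ≤ C)
    (hθj : 0 < θj) (hij : θj < θi) (hθi : θi ≤ 1)
    (hβ : ((l : ℝ) - 1) / C ≤ β) :
    (θi / (θi + β)) / (θi / (θi + β) + θj / (θj + β)) ≥
      1 / 2 + ((l : ℝ) - 1) * (θi - θj) / (4 * ((l : ℝ) - 1 + C)) := by
  have hl2 : (2:ℝ) ≤ (l:ℝ) := by exact_mod_cast hl
  have hL : (1:ℝ) ≤ (l:ℝ) - 1 := by linarith
  have hL0 : (0:ℝ) ≤ (l:ℝ) - 1 := by linarith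
  have hC0 : (0:ℝ) < C := by linarith
  have hβ0 : (0:ℝ) < β := lt_of_lt_of_le (by positivity) hβ
  have hβC : (l:ℝ) - 1 ≤ β * C := by
    rw [div_le_iff₀ hC0] at hβ; linarith
  have hθi0 : (0:ℝ) < θi := lt_trans hθj hij
  have hA : (0:ℝ) < θi + β := by linarith
  have hB : (0:ℝ) < θj + β := by linarith
  have hsum : (0:ℝ) < θi / (θi + β) + θj / (θj + β) := by positivity
  have hLC : (0:ℝ) < (l:ℝ) - 1 + C := by linarith
  have hslack : ((l:ℝ)-1) * (2*θi*θj + β*(θi+θj)) ≤ 2*β*((l:ℝ)-1+C) := by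
    nlinarith [mul_nonneg (sub_nonneg.2 hθi) hβ0.le,
      mul_nonneg (sub_nonneg.2 (le_of_lt (lt_of_lt_of_le hij hθi))) hβ0.le,
      mul_nonneg (mul_nonneg (sub_nonneg.2 hθi) hθj.le) hL0,
      mul_nonneg (sub_nonneg.2 (mul_le_one₀ hθi hθj.le (le_of_lt (lt_of_lt_of_le hij hθi)))) hL0,
      mul_nonneg (sub_nonneg.2 hθi) (mul_nonneg hβ0.le hL0),
      mul_nonneg (sub_nonneg.2 (le_of_lt (lt_of_lt_of_le hij hθi))) (mul_nonneg hβ0.le hL0)]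
  have hmain : ((l:ℝ)-1) * (θi - θj) * (2*θi*θj + β*(θi+θj)) ≤
      2*β*((l:ℝ)-1+C) * (θi - θj) := by
    have h := mul_le_mul_of_nonneg_right hslack (sub_nonneg.2 hij.le)
    nlinarith [h]
  have h4 : (0:ℝ) < 4 * ((l:ℝ) - 1 + C) := by linarith
  have hgoal : (1/2 + ((l:ℝ)-1)*(θi-θj)/(4*((l:ℝ)-1+C))) =
      (2*((l:ℝ)-1+C) + ((l:ℝ)-1)*(θi-θj)) / (4*((l:ℝ)-1+C)) := by
    field_simp; ring
  rw [ge_iff_le, le_div_iff₀ hsum, div_add_div _ _ hA.ne' hB.ne', ← mul_div_assoc,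
    hgoal, div_mul_eq_mul_div, div_div, div_le_div_iff₀ (by positivity) hA]
  nlinarith [mul_le_mul_of_nonneg_right hmain hA.le, mul_pos hA hLC,
    mul_pos (mul_pos hβ0 hLC) hA]
end
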